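/- If the basis enumerator polynomial M(x) of a matroid M is stable (M(z) ≠ 0 whenever all coordinates z_i ∈ ℂ have strictly positive imaginary part), then for distinct e, f, the polynomial ∂²M/∂x_e∂x_f · M − (∂M/∂x_e)(∂M/∂x_f), evaluated at any real point, is ≤ 0. -/

import Mathlib

open Finset

/-- Basis generating polynomial of the collection `Bs`, restricted to bases
containing `I` and disjoint from `J`, evaluated at weights `a`. -/
def genPoly {α : Type*} [DecidableEq α] (Bs : Finset (Finset α)) (I J : Finset α)
    (a : α → ℝ) : ℝ :=
  ∑ B ∈ Bs.filter (fun B => I ⊆ B ∧ Disjoint J B), ∏ i ∈ B, a i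

/-- The Rayleigh property for a matroid given by its collection of bases. -/
def IsRayleigh {α : Type*} [DecidableEq α] (Bs : Finset (Finset α)) : Prop :=
  ∀ e f : α, e ≠ f → ∀ a : α → ℝ, (∀ i, 0 ≤ a i) →
    genPoly Bs {e, f} ∅ a * genPoly Bs ∅ {e, f} a ≤
      genPoly Bs {e} {f} a * genPoly Bs {f} {e} a

/-- `Bs` is the collection of bases of a matroid: nonempty and satisfying the
basis exchange axiom. -/
def IsMatroidBases {α : Type*} [DecidableEq α] (Bs : Finset (Finset α)) : Prop :=
  Bs.Nonempty ∧
    ∀ B₁ ∈ Bs, ∀ B₂ ∈ Bs, ∀ x ∈ B₁ \ B₂, ∃ y ∈ B₂ \ B₁, insert y (B₁.erase x) ∈ Bs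

theorem split_gen' {α K : Type*} [DecidableEq α] [CommRing K] (S : Finset (Finset α))
    (f : α) (w : α → K) (t : Finset α → Finset α) :
    ∑ B ∈ S, ∏ i ∈ t B, w i =
      w f * ∑ B ∈ S.filter (fun B => f ∈ t B), ∏ i ∈ (t B).erase f, w i
       + ∑ B ∈ S.filter (fun B => f ∉ t B), ∏ i ∈ t B, w i := by
  rw [← Finset.sum_filter_add_sum_filter_not S (fun B => f ∈ t B), Finset.mul_sum]
  congr 1
  apply Finset.sum_congr rfl
  intro B hB
  rw [← Finset.mul_prod_erase _ _ (Finset.mem_filter.mp hB).2]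

theorem lin_e' {α K : Type*} [DecidableEq α] [CommRing K] (Bs : Finset (Finset α))
    (e f : α) (hef : e ≠ f) (w : α → K) :
    ∑ B ∈ Bs.filter (fun B => e ∈ B), ∏ i ∈ B.erase e, w i =
      (∑ B ∈ Bs.filter (fun B => e ∈ B ∧ f ∈ B), ∏ i ∈ (B.erase e).erase f, w i) * w f
      + ∑ B ∈ Bs.filter (fun B => e ∈ B ∧ f ∉ B), ∏ i ∈ B.erase e, w i := by
  rw [split_gen' (Bs.filter (fun B => e ∈ B)) f w (fun B => B.erase e)]
  rw [Finset.filter_filter, Finset.filter_filter, mul_comm]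
  congr 1
  · congr 1
    apply Finset.sum_congr _ (fun _ _ => rfl)
    apply Finset.filter_congr
    intro B _
    simp [Finset.mem_erase, Ne.symm hef]
  · apply Finset.sum_congr _ (fun _ _ => rfl)
    apply Finset.filter_congr
    intro B _
    simp [Finset.mem_erase, Ne.symm hef]

theorem lin_f' {α K : Type*} [DecidableEq α] [CommRing K] (Bs : Finset (Finset α))
    (e f : α) (hef : e ≠ f) (w : α → K) :
    ∑ B ∈ Bs.filter (fun B => f ∈ B), ∏ i ∈ B.erase f, w i =
      (∑ B ∈ Bs.filter (fun B => e ∈ B ∧ f ∈ B), ∏ i ∈ (B.erase e).erase f, w i) * w e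
      + ∑ B ∈ Bs.filter (fun B => e ∉ B ∧ f ∈ B), ∏ i ∈ B.erase f, w i := by
  rw [split_gen' (Bs.filter (fun B => f ∈ B)) e w (fun B => B.erase f)]
  rw [Finset.filter_filter, Finset.filter_filter, mul_comm]
  congr 1
  · congr 1
    apply Finset.sum_congr
    · apply Finset.filter_congr
      intro B _
      simp [Finset.mem_erase, hef, and_comm]
    · intro B _
      rw [Finset.erase_right_comm]
  · apply Finset.sum_congr _ (fun _ _ => rfl)
    apply Finset.filter_congr
    intro B _
    simp [Finset.mem_erase, hef, and_comm]

theorem quad' {α K : Type*} [DecidableEq α] [CommRing K] (Bs : Finset (Finset α))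
    (e f : α) (hef : e ≠ f) (w : α → K) :
    ∑ B ∈ Bs, ∏ i ∈ B, w i =
      (∑ B ∈ Bs.filter (fun B => e ∈ B ∧ f ∈ B), ∏ i ∈ (B.erase e).erase f, w i) * (w e * w f)
      + (∑ B ∈ Bs.filter (fun B => e ∈ B ∧ f ∉ B), ∏ i ∈ B.erase e, w i) * w e
      + (∑ B ∈ Bs.filter (fun B => e ∉ B ∧ f ∈ B), ∏ i ∈ B.erase f, w i) * w f
      + ∑ B ∈ Bs.filter (fun B => e ∉ B ∧ f ∉ B), ∏ i ∈ B, w i := by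
  have h0 := split_gen' Bs e w (fun B => B)
  rw [h0, lin_e' Bs e f hef w]
  have h1 := split_gen' (Bs.filter (fun B => e ∉ B)) f w (fun B => B)
  simp only [Finset.filter_filter] at h1
  rw [h1]
  ring

open MvPolynomial in
theorem pd_prod' (n : ℕ) (B : Finset (Fin n)) (e : Fin n) :
    pderiv e (∏ i ∈ B, (X i : MvPolynomial (Fin n) ℝ)) =
      if e ∈ B then ∏ i ∈ B.erase e, X i else 0 := by
  induction B using Finset.induction_on with
  | empty => simp
  | @insert j B hj ih =>
    rw [Finset.prod_insert hj, pderiv_mul, ih, pderiv_X]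
    by_cases hej : e = j
    · subst hej
      simp [hj, Finset.erase_insert hj, Pi.single_apply]
    · rw [Finset.erase_insert_of_ne (Ne.symm hej)]
      by_cases heB : e ∈ B
      · simp only [Pi.single_apply, if_neg (Ne.symm hej), if_pos heB,
          Finset.mem_insert, hej, heB, or_true, if_pos]
        rw [Finset.prod_insert (by simp [Finset.mem_erase, hj])]
        ring
      · simp [Pi.single_apply, Ne.symm hej, heB, hej]

open MvPolynomial in
theorem eval_pd' (n : ℕ) (Bs : Finset (Finset (Fin n))) (a : Fin n → ℝ) (e : Fin n) :
    eval a (pderiv e (∑ B ∈ Bs, ∏ i ∈ B, (X i : MvPolynomial (Fin n) ℝ))) =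
      ∑ B ∈ Bs.filter (fun B => e ∈ B), ∏ i ∈ B.erase e, a i := by
  rw [map_sum (pderiv e)]
  simp_rw [pd_prod']
  rw [Finset.sum_filter]
  simp [apply_ite (eval a)]

open MvPolynomial in
theorem eval_pd2' (n : ℕ) (Bs : Finset (Finset (Fin n))) (a : Fin n → ℝ) (e f : Fin n)
    (hef : e ≠ f) :
    eval a (pderiv e (pderiv f (∑ B ∈ Bs, ∏ i ∈ B, (X i : MvPolynomial (Fin n) ℝ)))) =
      ∑ B ∈ Bs.filter (fun B => e ∈ B ∧ f ∈ B), ∏ i ∈ (B.erase e).erase f, a i := by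
  rw [map_sum (pderiv f)]
  simp_rw [pd_prod']
  rw [map_sum (pderiv e)]
  simp_rw [apply_ite (pderiv e), pd_prod', map_zero]
  rw [map_sum (eval a), Finset.sum_filter]
  simp only [apply_ite (eval a), map_zero, map_prod, eval_X]
  apply Finset.sum_congr rfl
  intro B _
  by_cases hfB : f ∈ B
  · by_cases heB : e ∈ B
    · have he' : e ∈ B.erase f := Finset.mem_erase.mpr ⟨hef, heB⟩
      simp [hfB, heB, he', Finset.erase_right_comm]
    · have he' : e ∉ B.erase f := fun h => heB (Finset.mem_of_mem_erase h)
      simp [hfB, heB, he']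
  · simp [hfB]

open MvPolynomial in
/-- If the basis enumerator polynomial is stable (nonvanishing when all
coordinates have positive imaginary part), then
`M·∂_e∂_f M − ∂_e M·∂_f M ≤ 0` at every real point. -/
theorem stable_implies_rayleigh_diff (n : ℕ) (Bs : Finset (Finset (Fin n)))
    (e f : Fin n) (hef : e ≠ f)
    (hstable : ∀ z : Fin n → ℂ, (∀ i, 0 < (z i).im) →
      MvPolynomial.eval z (MvPolynomial.map (algebraMap ℝ ℂ)
        (∑ B ∈ Bs, ∏ i ∈ B, (MvPolynomial.X i : MvPolynomial (Fin n) ℝ))) ≠ 0) :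
    ∀ a : Fin n → ℝ,
      MvPolynomial.eval a
          (MvPolynomial.pderiv e (MvPolynomial.pderiv f
            (∑ B ∈ Bs, ∏ i ∈ B, (MvPolynomial.X i : MvPolynomial (Fin n) ℝ)))) *
        MvPolynomial.eval a (∑ B ∈ Bs, ∏ i ∈ B, (MvPolynomial.X i : MvPolynomial (Fin n) ℝ)) -
        MvPolynomial.eval a (MvPolynomial.pderiv e
            (∑ B ∈ Bs, ∏ i ∈ B, (MvPolynomial.X i : MvPolynomial (Fin n) ℝ))) *
          MvPolynomial.eval a (MvPolynomial.pderiv f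
            (∑ B ∈ Bs, ∏ i ∈ B, (MvPolynomial.X i : MvPolynomial (Fin n) ℝ))) ≤ 0 := by
  intro a
  -- the four coefficients of the multiaffine decomposition at `a`
  set A : ℝ := ∑ B ∈ Bs.filter (fun B => e ∈ B ∧ f ∈ B), ∏ i ∈ (B.erase e).erase f, a i with hA
  set Bq : ℝ := ∑ B ∈ Bs.filter (fun B => e ∈ B ∧ f ∉ B), ∏ i ∈ B.erase e, a i with hBq
  set Cq : ℝ := ∑ B ∈ Bs.filter (fun B => e ∉ B ∧ f ∈ B), ∏ i ∈ B.erase f, a i with hCq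
  set Dq : ℝ := ∑ B ∈ Bs.filter (fun B => e ∉ B ∧ f ∉ B), ∏ i ∈ B, a i with hDq
  have hM : eval a (∑ B ∈ Bs, ∏ i ∈ B, (X i : MvPolynomial (Fin n) ℝ)) =
      A * (a e * a f) + Bq * a e + Cq * a f + Dq := by
    rw [show eval a (∑ B ∈ Bs, ∏ i ∈ B, (X i : MvPolynomial (Fin n) ℝ)) =
        ∑ B ∈ Bs, ∏ i ∈ B, a i by simp]
    exact quad' Bs e f hef a
  have hE : eval a (pderiv e (∑ B ∈ Bs, ∏ i ∈ B, (X i : MvPolynomial (Fin n) ℝ))) =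
      A * a f + Bq := by
    rw [eval_pd', lin_e' Bs e f hef a]
  have hF : eval a (pderiv f (∑ B ∈ Bs, ∏ i ∈ B, (X i : MvPolynomial (Fin n) ℝ))) =
      A * a e + Cq := by
    rw [eval_pd', lin_f' Bs e f hef a]
  have hEF : eval a (pderiv e (pderiv f (∑ B ∈ Bs, ∏ i ∈ B, (X i : MvPolynomial (Fin n) ℝ)))) =
      A := eval_pd2' n Bs a e f hef
  rw [hM, hE, hF, hEF]
  have key : A * Dq - Bq * Cq ≤ 0 := by
    by_contra hcon
    push_neg at hcon
    -- complex coefficient functions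
    set wp : ℝ → Fin n → ℂ := fun ε i => (a i : ℂ) + (ε : ℂ) * Complex.I with hwp
    set Af : ℝ → ℂ := fun ε => ∑ B ∈ Bs.filter (fun B => e ∈ B ∧ f ∈ B),
      ∏ i ∈ (B.erase e).erase f, wp ε i with hAf
    set Bf : ℝ → ℂ := fun ε => ∑ B ∈ Bs.filter (fun B => e ∈ B ∧ f ∉ B),
      ∏ i ∈ B.erase e, wp ε i with hBf
    set Cf : ℝ → ℂ := fun ε => ∑ B ∈ Bs.filter (fun B => e ∉ B ∧ f ∈ B),
      ∏ i ∈ B.erase f, wp ε i with hCf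
    set Df : ℝ → ℂ := fun ε => ∑ B ∈ Bs.filter (fun B => e ∉ B ∧ f ∉ B),
      ∏ i ∈ B, wp ε i with hDf
    set Fc : ℝ → ℂ := fun ε => Af ε * Complex.I + Cf ε with hFc
    set Gc : ℝ → ℂ := fun ε => Bf ε * Complex.I + Df ε with hGc
    have hwp0 : wp 0 = fun i => ((a i : ℝ) : ℂ) := by
      funext i; simp [hwp]
    have hA0 : Af 0 = (A : ℂ) := by
      rw [hAf]; simp only [hwp0, hA]; push_cast; rfl
    have hB0 : Bf 0 = (Bq : ℂ) := by
      rw [hBf]; simp only [hwp0, hBq]; push_cast; rfl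
    have hC0 : Cf 0 = (Cq : ℂ) := by
      rw [hCf]; simp only [hwp0, hCq]; push_cast; rfl
    have hD0 : Df 0 = (Dq : ℂ) := by
      rw [hDf]; simp only [hwp0, hDq]; push_cast; rfl
    have hF0 : Fc 0 ≠ 0 := by
      rw [hFc]
      simp only [hA0, hC0]
      intro h
      have hA' : A = 0 := by
        have := congrArg Complex.im h
        simpa using this
      have hC' : Cq = 0 := by
        have := congrArg Complex.re h
        simpa using this
      rw [hA', hC'] at hcon
      simp at hcon
    have hcontA : Continuous Af := by
      rw [hAf]
      apply continuous_finset_sum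
      intro B _
      apply continuous_finset_prod
      intro i _
      simp only [hwp]
      fun_prop
    have hcontB : Continuous Bf := by
      rw [hBf]
      apply continuous_finset_sum
      intro B _
      apply continuous_finset_prod
      intro i _
      simp only [hwp]
      fun_prop
    have hcontC : Continuous Cf := by
      rw [hCf]
      apply continuous_finset_sum
      intro B _
      apply continuous_finset_prod
      intro i _
      simp only [hwp]
      fun_prop
    have hcontD : Continuous Df := by
      rw [hDf]
      apply continuous_finset_sum
      intro B _
      apply continuous_finset_prod
      intro i _
      simp only [hwp]
      fun_prop
    have hcontF : Continuous Fc := by rw [hFc]; fun_prop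
    have hcontG : Continuous Gc := by rw [hGc]; fun_prop
    have hIm0 : 0 < ((-Gc 0) / Fc 0).im := by
      have hnsq : 0 < Complex.normSq (Fc 0) := Complex.normSq_pos.mpr hF0
      rw [Complex.div_im]
      have h1 : (-Gc 0).im = -Bq := by rw [hGc]; simp [hB0, hD0]
      have h2 : (-Gc 0).re = -Dq := by rw [hGc]; simp [hB0, hD0]
      have h3 : (Fc 0).re = Cq := by rw [hFc]; simp [hA0, hC0]
      have h4 : (Fc 0).im = A := by rw [hFc]; simp [hA0, hC0]
      rw [h1, h2, h3, h4, div_sub_div_same]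
      apply div_pos _ hnsq
      nlinarith
    have hphi : ContinuousAt (fun ε => ((-Gc ε) / Fc ε).im) 0 :=
      (Complex.continuous_im.continuousAt).comp
        (((hcontG.continuousAt).neg).div (hcontF.continuousAt) hF0)
    have hev1 : ∀ᶠ ε in nhds (0 : ℝ), Fc ε ≠ 0 :=
      hcontF.continuousAt.eventually_ne hF0
    have hev2 : ∀ᶠ ε in nhds (0 : ℝ), 0 < ((-Gc ε) / Fc ε).im :=
      hphi.eventually (eventually_gt_nhds hIm0)
    have hev : ∀ᶠ ε in nhdsWithin (0 : ℝ) (Set.Ioi 0),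
        (Fc ε ≠ 0 ∧ 0 < ((-Gc ε) / Fc ε).im) ∧ ε ∈ Set.Ioi (0:ℝ) :=
      (((hev1.and hev2).filter_mono nhdsWithin_le_nhds).and self_mem_nhdsWithin)
    obtain ⟨ε, ⟨⟨hFε, hImε⟩, hεpos⟩⟩ := hev.exists
    set w : ℂ := -Gc ε / Fc ε with hw
    set z : Fin n → ℂ := fun i => if i = e then Complex.I else if i = f then w else wp ε i with hz
    have hzim : ∀ i, 0 < (z i).im := by
      intro i
      rw [hz]
      by_cases hie : i = e
      · simp [hie]
      · by_cases hif : i = f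
        · simp [hie, hif, Ne.symm hef]; exact hImε
        · simp [hie, hif, hwp]
          exact hεpos
    apply hstable z hzim
    rw [show eval z (map (algebraMap ℝ ℂ) (∑ B ∈ Bs, ∏ i ∈ B, (X i : MvPolynomial (Fin n) ℝ))) =
        ∑ B ∈ Bs, ∏ i ∈ B, z i by simp]
    rw [quad' Bs e f hef z]
    have hze : z e = Complex.I := by rw [hz]; simp
    have hzf : z f = w := by rw [hz]; simp [Ne.symm hef]
    have hAz : (∑ B ∈ Bs.filter (fun B => e ∈ B ∧ f ∈ B), ∏ i ∈ (B.erase e).erase f, z i)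
        = Af ε := by
      rw [hAf]
      apply Finset.sum_congr rfl
      intro B hB
      apply Finset.prod_congr rfl
      intro i hi
      have h1 : i ≠ f := (Finset.mem_erase.mp hi).1
      have h2 : i ≠ e := (Finset.mem_erase.mp (Finset.mem_of_mem_erase hi)).1
      rw [hz]; simp [h1, h2]
    have hBz : (∑ B ∈ Bs.filter (fun B => e ∈ B ∧ f ∉ B), ∏ i ∈ B.erase e, z i) = Bf ε := by
      rw [hBf]
      apply Finset.sum_congr rfl
      intro B hB
      apply Finset.prod_congr rfl
      intro i hi
      have h2 : i ≠ e := (Finset.mem_erase.mp hi).1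
      have h1 : i ≠ f := by
        intro h
        exact (Finset.mem_filter.mp hB).2.2 (h ▸ Finset.mem_of_mem_erase hi)
      rw [hz]; simp [h1, h2]
    have hCz : (∑ B ∈ Bs.filter (fun B => e ∉ B ∧ f ∈ B), ∏ i ∈ B.erase f, z i) = Cf ε := by
      rw [hCf]
      apply Finset.sum_congr rfl
      intro B hB
      apply Finset.prod_congr rfl
      intro i hi
      have h1 : i ≠ f := (Finset.mem_erase.mp hi).1
      have h2 : i ≠ e := by
        intro h
        exact (Finset.mem_filter.mp hB).2.1 (h ▸ Finset.mem_of_mem_erase hi)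
      rw [hz]; simp [h1, h2]
    have hDz : (∑ B ∈ Bs.filter (fun B => e ∉ B ∧ f ∉ B), ∏ i ∈ B, z i) = Df ε := by
      rw [hDf]
      apply Finset.sum_congr rfl
      intro B hB
      apply Finset.prod_congr rfl
      intro i hi
      have h2 : i ≠ e := by
        intro h
        exact (Finset.mem_filter.mp hB).2.1 (h ▸ hi)
      have h1 : i ≠ f := by
        intro h
        exact (Finset.mem_filter.mp hB).2.2 (h ▸ hi)
      rw [hz]; simp [h1, h2]
    rw [hAz, hBz, hCz, hDz, hze, hzf]
    have hstep : Af ε * (Complex.I * w) + Bf ε * Complex.I + Cf ε * w + Df ε =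
        Fc ε * w + Gc ε := by rw [hFc, hGc]; ring
    rw [hstep, hw, mul_comm, div_mul_cancel₀ _ hFε]
    ring
  nlinarith [key]
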